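/- If a k-uniform hypergraph on n vertices is self-complementary and t-subset-regular with t-valence λ (where t < k < n), then λ = C(n − t, k − t)/2; in particular, C(n − t, k − t) is even. -/

import Mathlib

/-- If a `k`-uniform hypergraph on `n` vertices is self-complementary and
`t`-subset-regular with `t`-valence `lam` (where `t < k < n`), then
`lam = C(n - t, k - t) / 2`; in particular, `C(n - t, k - t)` is even. -/
theorem valence_eq_choose_div_two_of_self_complementary
    (n k t : ℕ) (htk : t < k) (hkn : k < n)
    (E : Finset (Finset (Fin n)))
    (huniform : ∀ e ∈ E, e.card = k)
    (hsc : ∃ τ : Equiv.Perm (Fin n), ∀ e : Finset (Fin n), e.card = k →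
      (e ∈ E ↔ e.image τ ∉ E))
    (lam : ℕ)
    (hreg : ∀ s : Finset (Fin n), s.card = t →
      (E.filter (fun e => s ⊆ e)).card = lam) :
    lam = (n - t).choose (k - t) / 2 ∧ Even ((n - t).choose (k - t)) := by
  obtain ⟨τ, hτ⟩ := hsc
  have htn : t ≤ n := le_of_lt (htk.trans hkn)
  obtain ⟨s, hs_sub, hs_card⟩ :=
    Finset.exists_subset_card_eq (s := (Finset.univ : Finset (Fin n))) (n := t) (by simpa using htn)
  set A := (Finset.powersetCard k (Finset.univ : Finset (Fin n))).filter
      (fun e => s ⊆ e) with hA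
  have hAcard : A.card = (n - t).choose (k - t) := by
    have : A.card = ((Finset.univ \ s).powersetCard (k - t)).card := by
      refine (Finset.card_bij (fun x _ => x ∪ s) ?_ ?_ ?_).symm
      · intro x hx
        rw [Finset.mem_powersetCard] at hx
        obtain ⟨hx1, hx2⟩ := hx
        have hdisj : Disjoint x s := by
          refine Finset.disjoint_left.2 fun a ha has => ?_
          have := hx1 ha
          simp [Finset.mem_sdiff] at this
          exact this has
        rw [hA, Finset.mem_filter, Finset.mem_powersetCard]
        refine ⟨⟨Finset.subset_univ _, ?_⟩, Finset.subset_union_right⟩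
        rw [Finset.card_union_of_disjoint hdisj, hx2, hs_card]
        omega
      · intro x hx y hy hxy
        rw [Finset.mem_powersetCard] at hx hy
        have hdx : Disjoint x s := by
          refine Finset.disjoint_left.2 fun a ha has => ?_
          have := hx.1 ha; simp [Finset.mem_sdiff] at this; exact this has
        have hdy : Disjoint y s := by
          refine Finset.disjoint_left.2 fun a ha has => ?_
          have := hy.1 ha; simp [Finset.mem_sdiff] at this; exact this has
        have hxy' : x ∪ s = y ∪ s := hxy
        have : (x ∪ s) \ s = (y ∪ s) \ s := by rw [hxy']
        rwa [Finset.union_sdiff_cancel_right hdx,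
          Finset.union_sdiff_cancel_right hdy] at this
      · intro e he
        rw [hA, Finset.mem_filter, Finset.mem_powersetCard] at he
        obtain ⟨⟨_, hek⟩, hse⟩ := he
        refine ⟨e \ s, ?_, ?_⟩
        · rw [Finset.mem_powersetCard]
          constructor
          · exact Finset.sdiff_subset_sdiff (Finset.subset_univ _) le_rfl
          · rw [Finset.card_sdiff_of_subset hse, hek, hs_card]
        · show (e \ s) ∪ s = e
          rw [Finset.sdiff_union_self_eq_union]
          exact Finset.union_eq_left.2 hse
    rw [this, Finset.card_powersetCard, Finset.card_sdiff_of_subset (Finset.subset_univ _),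
      Finset.card_univ, Fintype.card_fin, hs_card]
  have h1 : (A.filter (fun e => e ∈ E)).card = lam := by
    rw [← hreg s hs_card]
    congr 1
    ext e
    simp only [hA, Finset.mem_filter, Finset.mem_powersetCard]
    constructor
    · rintro ⟨⟨_, hse⟩, heE⟩; exact ⟨heE, hse⟩
    · rintro ⟨heE, hse⟩
      exact ⟨⟨⟨Finset.subset_univ _, huniform e heE⟩, hse⟩, heE⟩
  have hs'card : (s.image τ.symm).card = t := by
    rw [Finset.card_image_of_injective _ τ.symm.injective, hs_card]
  have himg : (s.image τ.symm).image τ = s := by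
    rw [Finset.image_image]
    simp
  have h2 : (A.filter (fun e => e ∉ E)).card = lam := by
    rw [← hreg (s.image τ.symm) hs'card]
    refine (Finset.card_bij (fun e _ => e.image τ) ?_ ?_ ?_).symm
    · intro e he
      rw [Finset.mem_filter] at he
      obtain ⟨heE, hse⟩ := he
      have hek := huniform e heE
      have hsub : s ⊆ e.image τ := by
        rw [← himg]; exact Finset.image_subset_image hse
      rw [Finset.mem_filter, hA, Finset.mem_filter, Finset.mem_powersetCard]
      refine ⟨⟨⟨Finset.subset_univ _, ?_⟩, hsub⟩, (hτ e hek).1 heE⟩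
      rw [Finset.card_image_of_injective _ τ.injective, hek]
    · intro x hx y hy hxy
      have := congrArg (Finset.image τ.symm) hxy
      rwa [Finset.image_image, Finset.image_image,
        (by ext a; simp : (τ.symm ∘ τ : Fin n → Fin n) = id),
        Finset.image_id, Finset.image_id] at this
    · intro f hf
      rw [Finset.mem_filter, hA, Finset.mem_filter, Finset.mem_powersetCard] at hf
      obtain ⟨⟨⟨_, hfk⟩, hsf⟩, hfE⟩ := hf
      refine ⟨f.image τ.symm, ?_, ?_⟩
      · have hcard : (f.image τ.symm).card = k := by
          rw [Finset.card_image_of_injective _ τ.symm.injective, hfk]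
        have hback : (f.image τ.symm).image τ = f := by
          rw [Finset.image_image]; simp
        rw [Finset.mem_filter]
        refine ⟨?_, Finset.image_subset_image hsf⟩
        rw [hτ _ hcard, hback]
        simpa using hfE
      · show (f.image τ.symm).image τ = f
        rw [Finset.image_image]; simp
  have hsum : (n - t).choose (k - t) = lam + lam := by
    have := Finset.card_filter_add_card_filter_not (s := A) (p := fun e => e ∈ E)
    omega
  constructor
  · omega
  · exact ⟨lam, hsum⟩
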